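/- Deterministic core of the early-training comparison theorem: let φ_1, …, φ_K ∈ C¹(ℝ) with K ≥ m. Let Θ_FF(0) = {c, V} be any FFN parameters and let Θ_K(0) consist of the same {c, V} together with α(0) = (1, 0, …, 0) and ω(0) = (1, …, 1), so that u^K(·; Θ_K(0)) = u^FF(·; Θ_FF(0)). Let Θ_FF(t) and Θ_K(t) be solutions of the respective gradient flows of the square loss on an interval [0, T₀). If the K×m matrix A(0) with entries A_{kj} = Σ_{i=1}^N c_i φ_k(v_iᵀ x̃_j) has full rank m and the initial residual vector Res(X)(0) = (u(x_j; Θ(0)) − y_j)_{j=1}^m is nonzero, then there exists T ∈ (0, T₀] such that L^K(t) < L^FF(t) for all t ∈ (0, T). -/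

import Mathlib

open scoped BigOperators

noncomputable section

/-- Parameters `(c, V)` of a two-layer feed-forward network, as a Euclidean space. -/
abbrev FFParams (N d : ℕ) : Type :=
  EuclideanSpace ℝ (Fin N ⊕ Fin N × Fin (d + 1))

/-- Parameters `(c, V, α, ω)` of a two-layer Kronecker network, as a Euclidean space. -/
abbrev KParams (N d K : ℕ) : Type :=
  EuclideanSpace ℝ ((Fin N ⊕ Fin N × Fin (d + 1)) ⊕ (Fin K ⊕ Fin K))

/-- The two-layer feed-forward network `u^FF(x; θ) = Σ_i c_i φ₁(v_iᵀ x̃)`. -/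
def uFF {N d : ℕ} (φ1 : ℝ → ℝ) (θ : FFParams N d) (x : Fin (d + 1) → ℝ) : ℝ :=
  ∑ i, θ (Sum.inl i) * φ1 (∑ j, θ (Sum.inr (i, j)) * x j)

/-- The two-layer Kronecker network `u^K(x; Θ) = Σ_i c_i Σ_k α_k φ_k(ω_k v_iᵀ x̃)`. -/
def uK {N d K : ℕ} (φ : Fin K → ℝ → ℝ) (θ : KParams N d K) (x : Fin (d + 1) → ℝ) : ℝ :=
  ∑ i, θ (Sum.inl (Sum.inl i)) *
    ∑ k, θ (Sum.inr (Sum.inl k)) *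
      φ k (θ (Sum.inr (Sum.inr k)) * ∑ j, θ (Sum.inl (Sum.inr (i, j))) * x j)

/-- The square loss of the feed-forward network. -/
def sqLossFF {N d m : ℕ} (φ1 : ℝ → ℝ) (xt : Fin m → Fin (d + 1) → ℝ) (y : Fin m → ℝ)
    (θ : FFParams N d) : ℝ :=
  (1 / 2 : ℝ) * ∑ j, (uFF φ1 θ (xt j) - y j) ^ 2

/-- The square loss of the Kronecker network. -/
def sqLossK {N d K m : ℕ} (φ : Fin K → ℝ → ℝ) (xt : Fin m → Fin (d + 1) → ℝ)
    (y : Fin m → ℝ) (θ : KParams N d K) : ℝ :=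
  (1 / 2 : ℝ) * ∑ j, (uK φ θ (xt j) - y j) ^ 2

/- ### Auxiliary lemmas -/

lemma my_hasDerivAt_line {E : Type*} [NormedAddCommGroup E] [NormedSpace ℝ E]
    {f : E → ℝ} {x : E} (hf : DifferentiableAt ℝ f x) (v : E) :
    HasDerivAt (fun s : ℝ => f (x + s • v)) (fderiv ℝ f x v) 0 := by
  have h1 : HasDerivAt (fun s : ℝ => x + s • v) v 0 := by
    simpa using ((hasDerivAt_id (0 : ℝ)).smul_const v).const_add x
  have h3 : HasFDerivAt f (fderiv ℝ f x) ((fun s : ℝ => x + s • v) 0) := by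
    simpa using hf.hasFDerivAt
  exact h3.comp_hasDerivAt 0 h1

lemma my_fderiv_eq_inner_gradient {E : Type*} [NormedAddCommGroup E]
    [InnerProductSpace ℝ E] [CompleteSpace E] (f : E → ℝ) (x v : E) :
    fderiv ℝ f x v = inner ℝ (gradient f x) v := by
  rw [gradient]
  exact (InnerProductSpace.toDual_symm_apply).symm

lemma my_grad_norm_sq {ι : Type*} [Fintype ι] [DecidableEq ι]
    (f : EuclideanSpace ℝ ι → ℝ) (x : EuclideanSpace ℝ ι) :
    ‖gradient f x‖ ^ 2 = ∑ p, (fderiv ℝ f x (EuclideanSpace.single p 1)) ^ 2 := by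
  have hcomp : ∀ p, gradient f x p = fderiv ℝ f x (EuclideanSpace.single p 1) := by
    intro p
    have h1 : (inner ℝ (gradient f x) (EuclideanSpace.single p (1:ℝ)) : ℝ)
        = fderiv ℝ f x (EuclideanSpace.single p 1) :=
      (my_fderiv_eq_inner_gradient f x _).symm
    rw [EuclideanSpace.inner_single_right] at h1
    simpa using h1
  rw [← real_inner_self_eq_norm_sq, PiLp.inner_apply]
  simp only [RCLike.inner_apply, conj_trivial]
  exact Finset.sum_congr rfl fun p _ => by rw [hcomp p]; ring

lemma my_coord_diff {ι : Type*} [Fintype ι] (p : ι) :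
    Differentiable ℝ (fun θ : EuclideanSpace ℝ ι => θ p) :=
  (EuclideanSpace.proj (𝕜 := ℝ) p).differentiable

lemma my_mulVec_ne_zero {K m : ℕ} (A : Matrix (Fin K) (Fin m) ℝ)
    (hrank : A.rank = m) {v : Fin m → ℝ} (hv : v ≠ 0) : A.mulVec v ≠ 0 := by
  have h := LinearMap.finrank_range_add_finrank_ker A.mulVecLin
  rw [Matrix.rank] at hrank
  have hdom : Module.finrank ℝ (Fin m → ℝ) = m := by simp
  have hker : Module.finrank ℝ (LinearMap.ker A.mulVecLin) = 0 := by omega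
  have hbot : LinearMap.ker A.mulVecLin = ⊥ := Submodule.finrank_eq_zero.mp hker
  intro h0
  have hm : v ∈ LinearMap.ker A.mulVecLin := by
    simpa [LinearMap.mem_ker] using h0
  rw [hbot] at hm
  exact hv (by simpa using hm)

/-- Embedding of FF parameters into K parameters with `α = (1,0,…,0)`, `ω = (1,…,1)`. -/
def myEmb {N d : ℕ} (K : ℕ) (θ : FFParams N d) : KParams N d K :=
  WithLp.toLp 2 (Sum.elim (fun q => θ q)
    (Sum.elim (fun k : Fin K => if (k : ℕ) = 0 then (1 : ℝ) else 0) fun _ => 1))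

@[simp] lemma myEmb_inl {N d K : ℕ} (θ : FFParams N d) (q) :
    myEmb K θ (Sum.inl q) = θ q := rfl

@[simp] lemma myEmb_α {N d K : ℕ} (θ : FFParams N d) (k : Fin K) :
    myEmb (N := N) (d := d) K θ (Sum.inr (Sum.inl k)) = if (k : ℕ) = 0 then 1 else 0 := rfl

@[simp] lemma myEmb_ω {N d K : ℕ} (θ : FFParams N d) (k : Fin K) :
    myEmb (N := N) (d := d) K θ (Sum.inr (Sum.inr k)) = 1 := rfl

lemma my_sum_alpha0 {K : ℕ} (hK : 0 < K) (φ : Fin K → ℝ → ℝ) (z : ℝ) :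
    (∑ k : Fin K, (if (k : ℕ) = 0 then (1:ℝ) else 0) * φ k z) = φ ⟨0, hK⟩ z := by
  rw [Finset.sum_eq_single (⟨0, hK⟩ : Fin K)]
  · simp
  · intro b _ hb
    rw [if_neg, zero_mul]
    exact fun h => hb (Fin.ext h)
  · simp

lemma my_uK_emb {N d K : ℕ} (hK : 0 < K) (φ : Fin K → ℝ → ℝ) (θ : FFParams N d)
    (x : Fin (d + 1) → ℝ) : uK φ (myEmb K θ) x = uFF (φ ⟨0, hK⟩) θ x := by
  unfold uK uFF
  refine Finset.sum_congr rfl fun i _ => ?_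
  simp only [myEmb_inl, myEmb_α, myEmb_ω, one_mul]
  rw [my_sum_alpha0 hK]

lemma my_sqLossK_emb {N d K m : ℕ} (hK : 0 < K) (φ : Fin K → ℝ → ℝ)
    (xt : Fin m → Fin (d + 1) → ℝ) (y : Fin m → ℝ) (θ : FFParams N d) :
    sqLossK φ xt y (myEmb K θ) = sqLossFF (φ ⟨0, hK⟩) xt y θ := by
  unfold sqLossK sqLossFF
  simp [my_uK_emb hK]

lemma my_diff_sqLossFF {N d m : ℕ} (φ1 : ℝ → ℝ) (h : Differentiable ℝ φ1)
    (xt : Fin m → Fin (d + 1) → ℝ) (y : Fin m → ℝ) :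
    Differentiable ℝ (sqLossFF (N := N) φ1 xt y) := by
  unfold sqLossFF uFF
  refine Differentiable.const_mul (Differentiable.fun_sum fun j _ => ?_) _
  refine Differentiable.pow (Differentiable.sub_const ?_ _) 2
  refine Differentiable.fun_sum fun i _ => ?_
  exact (my_coord_diff _).mul
    (h.comp (Differentiable.fun_sum fun l _ => (my_coord_diff _).mul_const _))

lemma my_diff_sqLossK {N d K m : ℕ} (φ : Fin K → ℝ → ℝ) (hφ : ∀ k, Differentiable ℝ (φ k))
    (xt : Fin m → Fin (d + 1) → ℝ) (y : Fin m → ℝ) :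
    Differentiable ℝ (sqLossK (N := N) φ xt y) := by
  unfold sqLossK uK
  refine Differentiable.const_mul (Differentiable.fun_sum fun j _ => ?_) _
  refine Differentiable.pow (Differentiable.sub_const ?_ _) 2
  refine Differentiable.fun_sum fun i _ => ?_
  refine (my_coord_diff _).mul (Differentiable.fun_sum fun k _ => ?_)
  refine (my_coord_diff _).mul ((hφ k).comp ?_)
  exact (my_coord_diff _).mul
    (Differentiable.fun_sum fun l _ => (my_coord_diff _).mul_const _)

set_option maxHeartbeats 1000000 in
theorem early_training_comparison_deterministic {N d K m : ℕ} (hK : 0 < K) (hKm : m ≤ K)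
    (φ : Fin K → ℝ → ℝ) (hφ : ∀ k, ContDiff ℝ 1 (φ k))
    (c : Fin N → ℝ) (V : Fin N → Fin (d + 1) → ℝ)
    (xt : Fin m → Fin (d + 1) → ℝ) (y : Fin m → ℝ)
    (T₀ : ℝ) (hT₀ : 0 < T₀)
    (ΘFF : ℝ → FFParams N d) (ΘK : ℝ → KParams N d K)
    (hFFc : ∀ i, ΘFF 0 (Sum.inl i) = c i)
    (hFFv : ∀ i j, ΘFF 0 (Sum.inr (i, j)) = V i j)
    (hKc : ∀ i, ΘK 0 (Sum.inl (Sum.inl i)) = c i)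
    (hKv : ∀ i j, ΘK 0 (Sum.inl (Sum.inr (i, j))) = V i j)
    (hKα : ∀ k : Fin K, ΘK 0 (Sum.inr (Sum.inl k)) = if (k : ℕ) = 0 then 1 else 0)
    (hKω : ∀ k : Fin K, ΘK 0 (Sum.inr (Sum.inr k)) = 1)
    (hflowFF : ∀ t ∈ Set.Ico (0 : ℝ) T₀, HasDerivAt ΘFF
      (-(gradient (sqLossFF (φ ⟨0, hK⟩) xt y) (ΘFF t))) t)
    (hflowK : ∀ t ∈ Set.Ico (0 : ℝ) T₀, HasDerivAt ΘK
      (-(gradient (sqLossK φ xt y) (ΘK t))) t)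
    (hrank : Matrix.rank (Matrix.of fun (k : Fin K) (j : Fin m) =>
      ∑ i, c i * φ k (∑ l, V i l * xt j l)) = m)
    (hres : (fun j : Fin m => uFF (φ ⟨0, hK⟩) (ΘFF 0) (xt j) - y j) ≠ 0) :
    ∃ T : ℝ, 0 < T ∧ T ≤ T₀ ∧ ∀ t ∈ Set.Ioo (0 : ℝ) T,
      sqLossK φ xt y (ΘK t) < sqLossFF (φ ⟨0, hK⟩) xt y (ΘFF t) := by
  classical
  set φ0 : ℝ → ℝ := φ ⟨0, hK⟩ with hφ0
  have hdiffFF : Differentiable ℝ (sqLossFF (N := N) φ0 xt y) :=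
    my_diff_sqLossFF φ0 ((hφ _).differentiable one_ne_zero) xt y
  have hdiffK : Differentiable ℝ (sqLossK (N := N) φ xt y) :=
    my_diff_sqLossK φ (fun k => (hφ k).differentiable one_ne_zero) xt y
  -- the initial K-point is the embedded initial FF-point
  have hemb0 : myEmb K (ΘFF 0) = ΘK 0 := by
    ext p
    rcases p with q | kk
    · rcases q with i | ⟨i, j⟩
      · rw [myEmb_inl, hFFc, hKc]
      · rw [myEmb_inl, hFFv, hKv]
    · rcases kk with k | k
      · rw [myEmb_α, hKα]
      · rw [myEmb_ω, hKω]
  set R : Fin m → ℝ := fun j => uFF φ0 (ΘFF 0) (xt j) - y j with hR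
  set A : Matrix (Fin K) (Fin m) ℝ :=
    Matrix.of fun (k : Fin K) (j : Fin m) => ∑ i, c i * φ k (∑ l, V i l * xt j l) with hA
  -- equality of partial derivatives in the (c,V)-directions
  have hpar : ∀ p : Fin N ⊕ Fin N × Fin (d + 1),
      fderiv ℝ (sqLossK φ xt y) (ΘK 0) (EuclideanSpace.single (Sum.inl p) 1)
        = fderiv ℝ (sqLossFF φ0 xt y) (ΘFF 0) (EuclideanSpace.single p 1) := by
    intro p
    have h1 := my_hasDerivAt_line (hdiffK (ΘK 0)) (EuclideanSpace.single (Sum.inl p) 1)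
    have h2 := my_hasDerivAt_line (hdiffFF (ΘFF 0)) (EuclideanSpace.single p 1)
    have heq : ∀ s : ℝ, ΘK 0 + s • EuclideanSpace.single (Sum.inl p) (1 : ℝ)
        = myEmb K (ΘFF 0 + s • EuclideanSpace.single p 1) := by
      intro s
      ext q
      rw [← hemb0]
      rcases q with q' | kk
      · show myEmb K (ΘFF 0) (Sum.inl q') + s * _
          = (ΘFF 0) q' + s * _
        rw [myEmb_inl]
        congr 1
        simp [EuclideanSpace.single_apply]
      · show myEmb K (ΘFF 0) (Sum.inr kk) + s * _ = myEmb K _ (Sum.inr kk)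
        rcases kk with k | k <;>
          simp [EuclideanSpace.single_apply]
    have hfn : (fun s : ℝ => sqLossK φ xt y (ΘK 0 + s • EuclideanSpace.single (Sum.inl p) 1))
        = fun s : ℝ => sqLossFF φ0 xt y (ΘFF 0 + s • EuclideanSpace.single p 1) := by
      funext s
      rw [heq s, my_sqLossK_emb hK]
    rw [hfn] at h1
    exact h1.unique h2
  -- partial derivatives in the α-directions
  have hαpar : ∀ k : Fin K,
      fderiv ℝ (sqLossK φ xt y) (ΘK 0) (EuclideanSpace.single (Sum.inr (Sum.inl k)) 1)
        = ∑ j, R j * A k j := by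
    intro k
    have h1 := my_hasDerivAt_line (hdiffK (ΘK 0))
      (EuclideanSpace.single (Sum.inr (Sum.inl k)) 1)
    have huexp : ∀ s : ℝ,
        ∀ Θs : KParams N d K,
          Θs = ΘK 0 + s • EuclideanSpace.single (Sum.inr (Sum.inl k)) 1 →
        ∀ j : Fin m, uK φ Θs (xt j) = uFF φ0 (ΘFF 0) (xt j) + s * A k j := by
      intro s Θs hΘs j
      have hcoordα : ∀ k' : Fin K, Θs (Sum.inr (Sum.inl k'))
          = (if (k' : ℕ) = 0 then (1:ℝ) else 0) + s * (if k' = k then 1 else 0) := by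
        intro k'
        rw [hΘs, PiLp.add_apply, PiLp.smul_apply, hKα, EuclideanSpace.single_apply]
        simp
      have hcoordω : ∀ k' : Fin K, Θs (Sum.inr (Sum.inr k')) = 1 := by
        intro k'
        rw [hΘs, PiLp.add_apply, PiLp.smul_apply, hKω, EuclideanSpace.single_apply]
        simp
      have hcoordV : ∀ (i : Fin N) (l), Θs (Sum.inl (Sum.inr (i, l))) = V i l := by
        intro i l
        rw [hΘs, PiLp.add_apply, PiLp.smul_apply, hKv, EuclideanSpace.single_apply]
        simp
      have hcoordc : ∀ i : Fin N, Θs (Sum.inl (Sum.inl i)) = c i := by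
        intro i
        rw [hΘs, PiLp.add_apply, PiLp.smul_apply, hKc, EuclideanSpace.single_apply]
        simp
      have hval : ∀ i : Fin N,
          (∑ k' : Fin K, Θs (Sum.inr (Sum.inl k')) *
              φ k' (Θs (Sum.inr (Sum.inr k')) * ∑ l, Θs (Sum.inl (Sum.inr (i, l))) * xt j l))
            = φ0 (∑ l, V i l * xt j l) + s * φ k (∑ l, V i l * xt j l) := by
        intro i
        simp only [hcoordα, hcoordω, hcoordV, one_mul]
        rw [show (∑ k' : Fin K,
            ((if (k' : ℕ) = 0 then (1:ℝ) else 0) + s * (if k' = k then 1 else 0)) *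
              φ k' (∑ l, V i l * xt j l))
          = (∑ k' : Fin K, (if (k' : ℕ) = 0 then (1:ℝ) else 0) * φ k' (∑ l, V i l * xt j l))
            + ∑ k' : Fin K, if k' = k then s * φ k' (∑ l, V i l * xt j l) else 0 by
            rw [← Finset.sum_add_distrib]
            exact Finset.sum_congr rfl fun k' _ => by split_ifs <;> ring]
        rw [my_sum_alpha0 hK, Finset.sum_ite_eq' Finset.univ k]
        simp [hφ0]
      unfold uK
      simp only [hval, hcoordc]
      have huFF : uFF φ0 (ΘFF 0) (xt j) = ∑ i, c i * φ0 (∑ l, V i l * xt j l) := by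
        unfold uFF
        refine Finset.sum_congr rfl fun i _ => ?_
        rw [hFFc]
        congr 2
        exact Finset.sum_congr rfl fun l _ => by rw [hFFv]
      have hAkj : A k j = ∑ i, c i * φ k (∑ l, V i l * xt j l) := rfl
      rw [huFF, hAkj, Finset.mul_sum, ← Finset.sum_add_distrib]
      exact Finset.sum_congr rfl fun i _ => by ring
    have hfn : (fun s : ℝ =>
        sqLossK φ xt y (ΘK 0 + s • EuclideanSpace.single (Sum.inr (Sum.inl k)) 1))
        = fun s : ℝ => (1 / 2 : ℝ) * ∑ j, (R j + s * A k j) ^ 2 := by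
      funext s
      unfold sqLossK
      congr 1
      refine Finset.sum_congr rfl fun j _ => ?_
      rw [huexp s _ rfl j, hR]
      ring
    have h2 : HasDerivAt (fun s : ℝ => (1 / 2 : ℝ) * ∑ j, (R j + s * A k j) ^ 2)
        (∑ j, R j * A k j) 0 := by
      have hterm : ∀ j : Fin m,
          HasDerivAt (fun s : ℝ => (R j + s * A k j) ^ 2) (2 * R j * A k j) 0 := by
        intro j
        have hb : HasDerivAt (fun s : ℝ => R j + s * A k j) (A k j) 0 := by
          simpa using ((hasDerivAt_id (0 : ℝ)).mul_const (A k j)).const_add (R j)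
        have := hb.pow 2
        simp at this
        exact this
      have hsum := HasDerivAt.fun_sum (fun j (_ : j ∈ Finset.univ) => hterm j)
      have hmul := hsum.const_mul (1 / 2 : ℝ)
      rw [show (∑ j, R j * A k j) = (1 / 2 : ℝ) * ∑ i, 2 * R i * A k i by
        rw [Finset.mul_sum]
        exact Finset.sum_congr rfl fun j _ => by ring]
      exact hmul
    rw [hfn] at h1
    exact h1.unique h2
  -- comparison of gradient norms at time 0
  have hres' : R ≠ 0 := hres
  have hAR : A.mulVec R ≠ 0 := my_mulVec_ne_zero A hrank hres'
  obtain ⟨k0, hk0⟩ := Function.ne_iff.mp hAR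
  have hk0' : (A.mulVec R) k0 ≠ 0 := by simpa using hk0
  have hS2 : 0 < ∑ k : Fin K, (∑ j, R j * A k j) ^ 2 := by
    have hterm : ∀ k : Fin K, (∑ j, R j * A k j) = (A.mulVec R) k := by
      intro k
      simp [Matrix.mulVec, dotProduct, mul_comm]
    refine Finset.sum_pos' (fun k _ => sq_nonneg _) ⟨k0, Finset.mem_univ _, ?_⟩
    rw [hterm k0]
    positivity
  set aFF : ℝ := ‖gradient (sqLossFF φ0 xt y) (ΘFF 0)‖ ^ 2 with haFF
  set aK : ℝ := ‖gradient (sqLossK φ xt y) (ΘK 0)‖ ^ 2 with haK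
  have hcomp : aFF < aK := by
    rw [haFF, haK, my_grad_norm_sq, my_grad_norm_sq]
    have hbig : ∑ p : (Fin N ⊕ Fin N × Fin (d + 1)) ⊕ (Fin K ⊕ Fin K),
        (fderiv ℝ (sqLossK φ xt y) (ΘK 0) (EuclideanSpace.single p 1)) ^ 2
        = (∑ p : Fin N ⊕ Fin N × Fin (d + 1),
            (fderiv ℝ (sqLossK φ xt y) (ΘK 0) (EuclideanSpace.single (Sum.inl p) 1)) ^ 2)
          + ((∑ k : Fin K, (fderiv ℝ (sqLossK φ xt y) (ΘK 0)
              (EuclideanSpace.single (Sum.inr (Sum.inl k)) 1)) ^ 2)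
            + ∑ k : Fin K, (fderiv ℝ (sqLossK φ xt y) (ΘK 0)
              (EuclideanSpace.single (Sum.inr (Sum.inr k)) 1)) ^ 2) := by
      rw [Fintype.sum_sum_type]
      congr 1
      rw [Fintype.sum_sum_type]
    have h1 : ∑ p : Fin N ⊕ Fin N × Fin (d + 1),
        (fderiv ℝ (sqLossK φ xt y) (ΘK 0) (EuclideanSpace.single (Sum.inl p) 1)) ^ 2
        = ∑ p : Fin N ⊕ Fin N × Fin (d + 1),
        (fderiv ℝ (sqLossFF φ0 xt y) (ΘFF 0) (EuclideanSpace.single p 1)) ^ 2 :=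
      Finset.sum_congr rfl fun p _ => by rw [hpar p]
    have h2 : ∑ k : Fin K,
        (fderiv ℝ (sqLossK φ xt y) (ΘK 0)
          (EuclideanSpace.single (Sum.inr (Sum.inl k)) 1)) ^ 2
        = ∑ k : Fin K, (∑ j, R j * A k j) ^ 2 :=
      Finset.sum_congr rfl fun k _ => by rw [hαpar k]
    have h3 : 0 ≤ ∑ k : Fin K,
        (fderiv ℝ (sqLossK φ xt y) (ΘK 0)
          (EuclideanSpace.single (Sum.inr (Sum.inr k)) 1)) ^ 2 :=
      Finset.sum_nonneg fun k _ => sq_nonneg _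
    rw [hbig, h1, h2]
    linarith [hS2, h3]
  -- derivative of the loss difference at time 0
  have h0mem : (0 : ℝ) ∈ Set.Ico (0 : ℝ) T₀ := ⟨le_refl 0, hT₀⟩
  have hgF : HasDerivAt (fun t => sqLossFF φ0 xt y (ΘFF t)) (-aFF) 0 := by
    have h1 := (hdiffFF (ΘFF 0)).hasFDerivAt.comp_hasDerivAt 0 (hflowFF 0 h0mem)
    have h2 : fderiv ℝ (sqLossFF φ0 xt y) (ΘFF 0)
        (-(gradient (sqLossFF φ0 xt y) (ΘFF 0))) = -aFF := by
      rw [my_fderiv_eq_inner_gradient, inner_neg_right, real_inner_self_eq_norm_sq, haFF]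
    rw [h2] at h1
    exact h1
  have hgK : HasDerivAt (fun t => sqLossK φ xt y (ΘK t)) (-aK) 0 := by
    have h1 := (hdiffK (ΘK 0)).hasFDerivAt.comp_hasDerivAt 0 (hflowK 0 h0mem)
    have h2 : fderiv ℝ (sqLossK φ xt y) (ΘK 0)
        (-(gradient (sqLossK φ xt y) (ΘK 0))) = -aK := by
      rw [my_fderiv_eq_inner_gradient, inner_neg_right, real_inner_self_eq_norm_sq, haK]
    rw [h2] at h1
    exact h1
  set g : ℝ → ℝ := fun t => sqLossFF φ0 xt y (ΘFF t) - sqLossK φ xt y (ΘK t) with hg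
  have hg0 : g 0 = 0 := by
    rw [hg]
    simp only
    rw [← hemb0, my_sqLossK_emb hK, sub_self]
  have hgd : HasDerivAt g (aK - aFF) 0 := by
    have := hgF.sub hgK
    rw [show aK - aFF = -aFF - -aK by ring]
    exact this
  have hD : 0 < aK - aFF := by linarith
  rw [hasDerivAt_iff_tendsto_slope] at hgd
  have hev : ∀ᶠ t in nhdsWithin (0 : ℝ) {(0 : ℝ)}ᶜ, 0 < slope g 0 t :=
    hgd.eventually (lt_mem_nhds hD)
  rw [eventually_nhdsWithin_iff] at hev
  rw [Metric.eventually_nhds_iff] at hev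
  obtain ⟨ε, hε, hball⟩ := hev
  refine ⟨min ε T₀, lt_min hε hT₀, min_le_right _ _, ?_⟩
  intro t ht
  obtain ⟨ht0, htT⟩ := ht
  have htε : dist t 0 < ε := by
    rw [Real.dist_eq, sub_zero, abs_of_pos ht0]
    exact lt_of_lt_of_le htT (min_le_left _ _)
  have hslope : 0 < slope g 0 t := hball htε (by simpa using ne_of_gt ht0)
  have hgt : 0 < g t := by
    rw [slope_def_field, hg0, sub_zero, sub_zero] at hslope
    have := mul_pos hslope ht0
    rwa [div_mul_cancel₀ _ (ne_of_gt ht0)] at this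
  have : sqLossK φ xt y (ΘK t) < sqLossFF φ0 xt y (ΘFF t) := by
    have := hgt
    rw [hg] at this
    simpa using sub_pos.mp this
  exact this
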